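/- For a bounded kernel with bound M_k, if Z_1,…,Z_n are i.i.d. from P with mean embedding μ = E[φ(Z)], and μ̂ = (1/n)Σ φ(Z_i), then E[‖μ − μ̂‖_H] ≤ 2√(M_k/n). -/

import Mathlib

open MeasureTheory ProbabilityTheory
open scoped RealInnerProductSpace

/-- For a bounded kernel with bound `M_k`, if `Z₁,…,Zₙ` are i.i.d. from `P`,
with mean embedding `μ = E[φ(Z)]` and empirical mean `μ̂ = (1/n) ∑ᵢ φ(Zᵢ)`, then
`E[‖μ − μ̂‖] ≤ 2 √(M_k/n)`. -/
theorem expected_mean_embedding_deviation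
    {Zt H Ω : Type*} [NormedAddCommGroup H] [InnerProductSpace ℝ H] [CompleteSpace H]
    [MeasurableSpace Zt] [MeasurableSpace Ω]
    (μ : Measure Ω) [IsProbabilityMeasure μ]
    (P : Measure Zt) [IsProbabilityMeasure P]
    (φ : Zt → H) (k : Zt → Zt → ℝ) (Mk : ℝ)
    (hrepr : ∀ z z', k z z' = ⟪φ z, φ z'⟫)
    (hbound : ∀ z, k z z ≤ Mk)
    (n : ℕ) (hn : 0 < n)
    (Z : Fin n → Ω → Zt)
    (hZmeas : ∀ i, Measurable (Z i))
    (hZindep : iIndepFun Z μ)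
    (hZlaw : ∀ i, Measure.map (Z i) μ = P)
    (hint : Integrable (fun z => φ z) P) :
    (∫ ω, ‖(∫ z, φ z ∂P) - (n : ℝ)⁻¹ • ∑ i, φ (Z i ω)‖ ∂μ) ≤
      2 * Real.sqrt (Mk / n) := by
  set m : H := ∫ z, φ z ∂P with hm_def
  -- basic bounds
  have hφsq : ∀ z, ‖φ z‖ ^ 2 ≤ Mk := by
    intro z
    have : k z z = ‖φ z‖ ^ 2 := by rw [hrepr, real_inner_self_eq_norm_sq]
    linarith [hbound z]
  have hMk0 : 0 ≤ Mk := by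
    have hne : Nonempty Zt := by
      by_contra h
      rw [not_nonempty_iff] at h
      have : P Set.univ = 1 := measure_univ
      rw [Set.univ_eq_empty_iff.mpr h] at this
      simp at this
    obtain ⟨z⟩ := hne
    exact le_trans (by positivity) (hφsq z)
  have hφz : ∀ z, ‖φ z‖ ≤ Real.sqrt Mk := fun z =>
    (Real.le_sqrt (norm_nonneg (φ z)) hMk0).mpr (hφsq z)
  have hmnorm : ‖m‖ ≤ Real.sqrt Mk := by
    calc ‖m‖ ≤ ∫ z, ‖φ z‖ ∂P := norm_integral_le_integral_norm _
    _ ≤ ∫ _z, Real.sqrt Mk ∂P := integral_mono hint.norm (integrable_const _) hφz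
    _ = Real.sqrt Mk := by simp
  set ψ : Zt → H := fun z => m - φ z with hψ_def
  have hψint : Integrable ψ P := (integrable_const m).sub hint
  have hψ0 : ∫ z, ψ z ∂P = 0 := by
    rw [integral_sub (integrable_const m) hint, integral_const]; simp [hm_def]
  have hψb : ∀ z, ‖ψ z‖ ≤ 2 * Real.sqrt Mk := by
    intro z
    calc ‖m - φ z‖ ≤ ‖m‖ + ‖φ z‖ := norm_sub_le _ _
    _ ≤ 2 * Real.sqrt Mk := by linarith [hφz z]
  -- measurability of composed functions
  have hψm : AEStronglyMeasurable ψ P := hψint.1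
  have hψZ : ∀ i, AEStronglyMeasurable (fun ω => ψ (Z i ω)) μ := by
    intro i
    have : AEStronglyMeasurable ψ (Measure.map (Z i) μ) := by rw [hZlaw i]; exact hψm
    exact this.comp_aemeasurable (hZmeas i).aemeasurable
  -- the deviation function
  set F : Ω → H := fun ω => m - (n : ℝ)⁻¹ • ∑ i, φ (Z i ω) with hF_def
  have hFeq : ∀ ω, F ω = (n : ℝ)⁻¹ • ∑ i, ψ (Z i ω) := by
    intro ω
    have hns : ((n : ℝ)⁻¹ • (n : ℕ) • m) = m := by
      rw [← Nat.cast_smul_eq_nsmul ℝ, smul_smul,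
        inv_mul_cancel₀ (Nat.cast_ne_zero.mpr hn.ne'), one_smul]
    simp only [hF_def, hψ_def, Finset.sum_sub_distrib, Finset.sum_const,
      Finset.card_univ, Fintype.card_fin, smul_sub, hns]
  have hFb : ∀ ω, ‖F ω‖ ≤ 2 * Real.sqrt Mk := by
    intro ω
    rw [hFeq]
    calc ‖(n : ℝ)⁻¹ • ∑ i, ψ (Z i ω)‖ = (n : ℝ)⁻¹ * ‖∑ i, ψ (Z i ω)‖ := by
          rw [norm_smul, Real.norm_eq_abs, abs_of_nonneg (by positivity)]
    _ ≤ (n : ℝ)⁻¹ * ∑ _i : Fin n, (2 * Real.sqrt Mk) := by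
          gcongr
          exact le_trans (norm_sum_le _ _) (Finset.sum_le_sum fun i _ => hψb _)
    _ ≤ 2 * Real.sqrt Mk := by
          rw [Finset.sum_const, Finset.card_univ, Fintype.card_fin, nsmul_eq_mul,
            ← mul_assoc, inv_mul_cancel₀ (Nat.cast_ne_zero.mpr hn.ne' : (n:ℝ) ≠ 0), one_mul]
  have hFm : AEStronglyMeasurable F μ := by
    have : AEStronglyMeasurable (fun ω => ∑ i, ψ (Z i ω)) μ :=
      Finset.aestronglyMeasurable_fun_sum _ (fun i _ => hψZ i)
    have h2 : AEStronglyMeasurable (fun ω => (n : ℝ)⁻¹ • ∑ i, ψ (Z i ω)) μ :=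
      this.const_smul _
    exact (funext hFeq ▸ h2 : AEStronglyMeasurable F μ)
  set f : Ω → ℝ := fun ω => ‖F ω‖ with hf_def
  have hfm : AEStronglyMeasurable f μ := hFm.norm
  have hfint : Integrable f μ :=
    Integrable.mono' (integrable_const (2 * Real.sqrt Mk)) hfm
      (ae_of_all _ fun ω => by rw [Real.norm_eq_abs, abs_of_nonneg (norm_nonneg _)]; exact hFb ω)
  have hf2int : Integrable (fun ω => f ω ^ 2) μ :=
    Integrable.mono' (integrable_const ((2 * Real.sqrt Mk) ^ 2)) (hfm.pow 2)
      (ae_of_all _ fun ω => by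
        rw [Real.norm_eq_abs, abs_of_nonneg (by positivity)]
        exact pow_le_pow_left₀ (norm_nonneg _) (hFb ω) 2)
  -- step A : (∫ f)^2 ≤ ∫ f^2
  set c : ℝ := ∫ ω, f ω ∂μ with hc_def
  have hc0 : 0 ≤ c := integral_nonneg fun ω => norm_nonneg _
  have hA : c ^ 2 ≤ ∫ ω, f ω ^ 2 ∂μ := by
    have hexp : ∫ ω, (f ω - c) ^ 2 ∂μ = (∫ ω, f ω ^ 2 ∂μ) - c ^ 2 := by
      have h1 : ∀ ω, (f ω - c) ^ 2 = f ω ^ 2 - (2 * c) * f ω + c ^ 2 := fun ω => by ring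
      have hi1 : Integrable (fun ω => f ω ^ 2 - 2 * c * f ω) μ :=
        hf2int.sub (hfint.const_mul (2 * c))
      have hi2 : Integrable (fun ω => 2 * c * f ω) μ := hfint.const_mul (2 * c)
      rw [integral_congr_ae (ae_of_all _ h1), integral_add hi1 (integrable_const _),
        integral_sub hf2int hi2, integral_const_mul, integral_const]
      simp [hc_def]
      ring
    have hnn : 0 ≤ ∫ ω, (f ω - c) ^ 2 ∂μ := integral_nonneg fun ω => by positivity
    linarith [hexp ▸ hnn]
  -- cross terms vanish
  have hinner_int : ∀ i j : Fin n,
      Integrable (fun ω => (⟪ψ (Z i ω), ψ (Z j ω)⟫ : ℝ)) μ := by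
    intro i j
    refine Integrable.mono' (integrable_const ((2 * Real.sqrt Mk) ^ 2))
      ((hψZ i).inner (hψZ j)) (ae_of_all _ fun ω => ?_)
    calc ‖(⟪ψ (Z i ω), ψ (Z j ω)⟫ : ℝ)‖ ≤ ‖ψ (Z i ω)‖ * ‖ψ (Z j ω)‖ := norm_inner_le_norm _ _
    _ ≤ (2 * Real.sqrt Mk) * (2 * Real.sqrt Mk) :=
        mul_le_mul (hψb _) (hψb _) (norm_nonneg _) (by positivity)
    _ = (2 * Real.sqrt Mk) ^ 2 := by ring
  have hcross : ∀ i j : Fin n, i ≠ j →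
      (∫ ω, (⟪ψ (Z i ω), ψ (Z j ω)⟫ : ℝ) ∂μ) = 0 := by
    intro i j hij
    have hmap : Measure.map (fun ω => (Z i ω, Z j ω)) μ = P.prod P := by
      rw [(indepFun_iff_map_prod_eq_prod_map_map (hZmeas i).aemeasurable
        (hZmeas j).aemeasurable).mp (hZindep.indepFun hij), hZlaw i, hZlaw j]
    have hpm : AEMeasurable (fun ω => (Z i ω, Z j ω)) μ :=
      ((hZmeas i).prodMk (hZmeas j)).aemeasurable
    have hg1 : AEStronglyMeasurable (fun p : Zt × Zt => ψ p.1) (P.prod P) :=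
      hψm.comp_quasiMeasurePreserving Measure.quasiMeasurePreserving_fst
    have hg2 : AEStronglyMeasurable (fun p : Zt × Zt => ψ p.2) (P.prod P) :=
      hψm.comp_quasiMeasurePreserving Measure.quasiMeasurePreserving_snd
    have hgm : AEStronglyMeasurable (fun p : Zt × Zt => (⟪ψ p.1, ψ p.2⟫ : ℝ)) (P.prod P) :=
      hg1.inner hg2
    have hgint : Integrable (fun p : Zt × Zt => (⟪ψ p.1, ψ p.2⟫ : ℝ)) (P.prod P) := by
      refine Integrable.mono' (integrable_const ((2 * Real.sqrt Mk) ^ 2)) hgm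
        (ae_of_all _ fun p => ?_)
      calc ‖(⟪ψ p.1, ψ p.2⟫ : ℝ)‖ ≤ ‖ψ p.1‖ * ‖ψ p.2‖ := norm_inner_le_norm _ _
      _ ≤ (2 * Real.sqrt Mk) * (2 * Real.sqrt Mk) :=
          mul_le_mul (hψb _) (hψb _) (norm_nonneg _) (by positivity)
      _ = (2 * Real.sqrt Mk) ^ 2 := by ring
    calc (∫ ω, (⟪ψ (Z i ω), ψ (Z j ω)⟫ : ℝ) ∂μ)
        = ∫ p : Zt × Zt, (⟪ψ p.1, ψ p.2⟫ : ℝ) ∂(P.prod P) := by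
          rw [← hmap, integral_map hpm (by rw [hmap]; exact hgm)]
    _ = ∫ z, ∫ z', (⟪ψ z, ψ z'⟫ : ℝ) ∂P ∂P := integral_prod _ hgint
    _ = ∫ z, (⟪ψ z, ∫ z', ψ z' ∂P⟫ : ℝ) ∂P :=
          integral_congr_ae (ae_of_all _ fun z => integral_inner hψint (ψ z))
    _ = 0 := by rw [hψ0]; simp
  -- diagonal terms
  have hdiag : ∀ i : Fin n, (∫ ω, (⟪ψ (Z i ω), ψ (Z i ω)⟫ : ℝ) ∂μ) ≤ 4 * Mk := by
    intro i
    have : (∫ ω, (⟪ψ (Z i ω), ψ (Z i ω)⟫ : ℝ) ∂μ) ≤ ∫ _ω, (2 * Real.sqrt Mk) ^ 2 ∂μ := by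
      refine integral_mono (hinner_int i i) (integrable_const _) fun ω => ?_
      rw [real_inner_self_eq_norm_sq]
      exact pow_le_pow_left₀ (norm_nonneg _) (hψb _) 2
    rw [integral_const] at this
    simp only [probReal_univ, measure_univ, ENNReal.toReal_one, smul_eq_mul, one_mul] at this
    calc (∫ ω, (⟪ψ (Z i ω), ψ (Z i ω)⟫ : ℝ) ∂μ) ≤ (2 * Real.sqrt Mk) ^ 2 := this
    _ = 4 * (Real.sqrt Mk ^ 2) := by ring
    _ = 4 * Mk := by rw [Real.sq_sqrt hMk0]
  -- step B : ∫ f^2 ≤ 4 * Mk / n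
  have hB : (∫ ω, f ω ^ 2 ∂μ) ≤ 4 * Mk / n := by
    have hfsq : ∀ ω, f ω ^ 2 =
        ((n : ℝ)⁻¹) ^ 2 * ∑ i, ∑ j, (⟪ψ (Z i ω), ψ (Z j ω)⟫ : ℝ) := by
      intro ω
      have hT : ‖∑ i, ψ (Z i ω)‖ ^ 2 = ∑ i, ∑ j, (⟪ψ (Z i ω), ψ (Z j ω)⟫ : ℝ) := by
        rw [← real_inner_self_eq_norm_sq, sum_inner]
        exact Finset.sum_congr rfl fun i _ => inner_sum _ _ _
      rw [hf_def]
      simp only [hFeq ω]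
      rw [norm_smul, mul_pow, ← hT, Real.norm_eq_abs, sq_abs]
    rw [integral_congr_ae (ae_of_all _ hfsq), integral_const_mul]
    have hsum_int : (∫ ω, ∑ i, ∑ j, (⟪ψ (Z i ω), ψ (Z j ω)⟫ : ℝ) ∂μ)
        = ∑ i, ∑ j, ∫ ω, (⟪ψ (Z i ω), ψ (Z j ω)⟫ : ℝ) ∂μ := by
      rw [integral_finset_sum _ (fun i _ => integrable_finset_sum _ (fun j _ => hinner_int i j))]
      exact Finset.sum_congr rfl fun i _ => integral_finset_sum _ (fun j _ => hinner_int i j)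
    rw [hsum_int]
    have hrowsum : ∀ i : Fin n,
        (∑ j, ∫ ω, (⟪ψ (Z i ω), ψ (Z j ω)⟫ : ℝ) ∂μ) ≤ 4 * Mk := by
      intro i
      rw [Finset.sum_eq_single i (fun j _ hj => hcross i j (Ne.symm hj)) (by simp)]
      exact hdiag i
    calc ((n : ℝ)⁻¹) ^ 2 * ∑ i, ∑ j, ∫ ω, (⟪ψ (Z i ω), ψ (Z j ω)⟫ : ℝ) ∂μ
        ≤ ((n : ℝ)⁻¹) ^ 2 * ∑ _i : Fin n, (4 * Mk) := by
          gcongr with i _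
          · exact hrowsum i
    _ = ((n : ℝ)⁻¹) ^ 2 * (n * (4 * Mk)) := by
          rw [Finset.sum_const, Finset.card_univ, Fintype.card_fin, nsmul_eq_mul]
    _ = 4 * Mk / n := by
          field_simp
  -- conclude
  have hfinal : c ≤ Real.sqrt (4 * (Mk / n)) := by
    rw [Real.le_sqrt hc0 (by positivity)]
    calc c ^ 2 ≤ ∫ ω, f ω ^ 2 ∂μ := hA
    _ ≤ 4 * Mk / n := hB
    _ = 4 * (Mk / n) := by ring
  have h4 : Real.sqrt (4 * (Mk / n)) = 2 * Real.sqrt (Mk / n) := by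
    rw [Real.sqrt_mul (by norm_num : (0:ℝ) ≤ 4), show (4:ℝ) = 2 ^ 2 by norm_num,
      Real.sqrt_sq (by norm_num : (0:ℝ) ≤ 2)]
  calc (∫ ω, ‖(∫ z, φ z ∂P) - (n : ℝ)⁻¹ • ∑ i, φ (Z i ω)‖ ∂μ) = c := rfl
  _ ≤ Real.sqrt (4 * (Mk / n)) := hfinal
  _ = 2 * Real.sqrt (Mk / n) := h4
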